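/- arXiv:0807.0848 — 2 statements merged into one kernel-verified Lean document; each statement's English description precedes it below -/
import Mathlib

section
/- Let A : [λ⁻¹, λ] → Sym_n(ℝ) be a C¹ family of symmetric matrices such that λ⁻¹|ξ|² ≤ A(t)ξ·ξ ≤ λ|ξ|² and A'(t)ξ·ξ ≥ F|ξ|² for all t and ξ. Then for all s, t in [λ⁻¹, λ] with s ≤ t and every ξ ∈ ℝⁿ, (A(s)⁻¹ − A(t)⁻¹)ξ·ξ ≥ F λ⁻⁴ (t − s) |ξ|². -/
open Matrix

/-- Monotonicity of the inverse of a C¹ monotone family of symmetric elliptic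
matrices: `(A(s)⁻¹ − A(t)⁻¹)ξ·ξ ≥ F λ⁻⁴ (t − s)|ξ|²` for `s ≤ t`. -/
theorem inverse_matrix_monotonicity
    (n : ℕ) (lam F : ℝ) (hlam : 1 ≤ lam) (hF : 0 < F)
    (A A' : ℝ → Matrix (Fin n) (Fin n) ℝ)
    (hsym : ∀ t ∈ Set.Icc lam⁻¹ lam, (A t).IsSymm)
    (hderiv : ∀ t ∈ Set.Icc lam⁻¹ lam, ∀ i j,
      HasDerivAt (fun s => A s i j) (A' t i j) t)
    (hell : ∀ t ∈ Set.Icc lam⁻¹ lam, ∀ ξ : Fin n → ℝ,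
      lam⁻¹ * (ξ ⬝ᵥ ξ) ≤ (A t).mulVec ξ ⬝ᵥ ξ ∧
      (A t).mulVec ξ ⬝ᵥ ξ ≤ lam * (ξ ⬝ᵥ ξ))
    (hmono : ∀ t ∈ Set.Icc lam⁻¹ lam, ∀ ξ : Fin n → ℝ,
      F * (ξ ⬝ᵥ ξ) ≤ (A' t).mulVec ξ ⬝ᵥ ξ) :
    ∀ s ∈ Set.Icc lam⁻¹ lam, ∀ t ∈ Set.Icc lam⁻¹ lam, s ≤ t →
      ∀ ξ : Fin n → ℝ,
        F * (lam ^ 4)⁻¹ * (t - s) * (ξ ⬝ᵥ ξ) ≤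
          ((A s)⁻¹ - (A t)⁻¹).mulVec ξ ⬝ᵥ ξ := by
  have hl0 : (0:ℝ) < lam := lt_of_lt_of_le one_pos hlam
  have hli : (0:ℝ) < lam⁻¹ := by positivity
  -- nonnegativity of dot product with self
  have hdotnn : ∀ v : Fin n → ℝ, 0 ≤ v ⬝ᵥ v := fun v =>
    Finset.sum_nonneg fun i _ => mul_self_nonneg _
  -- quadratic form nonneg
  have hqnn : ∀ u ∈ Set.Icc lam⁻¹ lam, ∀ v : Fin n → ℝ,
      0 ≤ (A u).mulVec v ⬝ᵥ v := fun u hu v =>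
    le_trans (mul_nonneg hli.le (hdotnn v)) (hell u hu v).1
  -- invertibility
  have hdet : ∀ u ∈ Set.Icc lam⁻¹ lam, IsUnit (A u).det := by
    intro u hu
    rw [isUnit_iff_ne_zero]
    intro h
    obtain ⟨v, hv, hv0⟩ := (Matrix.exists_mulVec_eq_zero_iff).2 h
    have h1 := (hell u hu v).1
    rw [hv0, zero_dotProduct] at h1
    have : v ⬝ᵥ v ≤ 0 := by nlinarith [hdotnn v]
    exact hv (dotProduct_self_eq_zero.1 (le_antisymm this (hdotnn v)))
  -- symmetry of the form
  have hsd : ∀ u ∈ Set.Icc lam⁻¹ lam, ∀ v w : Fin n → ℝ,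
      (A u).mulVec v ⬝ᵥ w = v ⬝ᵥ (A u).mulVec w := by
    intro u hu v w
    rw [Matrix.dotProduct_mulVec, ← Matrix.mulVec_transpose, (hsym u hu).eq,
      dotProduct_comm]
  intro s hs t ht hst ξ
  set η : Fin n → ℝ := (A t)⁻¹.mulVec ξ with hη
  have hAη : (A t).mulVec η = ξ := by
    rw [hη, Matrix.mulVec_mulVec, Matrix.mul_nonsing_inv _ (hdet t ht),
      Matrix.one_mulVec]
  set u : Fin n → ℝ := (A s)⁻¹.mulVec ξ with hu
  have hAu : (A s).mulVec u = ξ := by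
    rw [hu, Matrix.mulVec_mulVec, Matrix.mul_nonsing_inv _ (hdet s hs),
      Matrix.one_mulVec]
  -- Step 1: variational inequality at s
  have step1 : ξ ⬝ᵥ η + (A t).mulVec η ⬝ᵥ η - (A s).mulVec η ⬝ᵥ η ≤ u ⬝ᵥ ξ := by
    have h0 : 0 ≤ (A s).mulVec (u - η) ⬝ᵥ (u - η) := hqnn s hs _
    rw [Matrix.mulVec_sub, sub_dotProduct, dotProduct_sub,
      dotProduct_sub, hAu, hsd s hs η u, hAu] at h0
    have e1 : ξ ⬝ᵥ u = u ⬝ᵥ ξ := dotProduct_comm _ _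
    have e2 : η ⬝ᵥ ξ = ξ ⬝ᵥ η := dotProduct_comm _ _
    have e3 : (A t).mulVec η ⬝ᵥ η = ξ ⬝ᵥ η := by
      rw [hsd t ht η η, hAη, dotProduct_comm]
    rw [e1, e2] at h0
    rw [e3]
    linarith
  -- Step 3: MVT
  have step3 : F * (t - s) * (η ⬝ᵥ η) ≤
      (A t).mulVec η ⬝ᵥ η - (A s).mulVec η ⬝ᵥ η := by
    have hq : ∀ x ∈ Set.Icc lam⁻¹ lam,
        HasDerivAt (fun y => (A y).mulVec η ⬝ᵥ η) ((A' x).mulVec η ⬝ᵥ η) x := by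
      intro x hx
      have h := HasDerivAt.sum (u := Finset.univ) (x := x)
        (fun i _ => HasDerivAt.sum (u := Finset.univ)
          (fun j _ => ((hderiv x hx i j).mul_const (η j)).mul_const (η i)))
      have e : (fun y => (A y).mulVec η ⬝ᵥ η) =
          fun y => ∑ i : Fin n, ∑ j : Fin n, A y i j * η j * η i := by
        funext y
        simp [Matrix.mulVec, dotProduct, Finset.sum_mul]
      have e' : (A' x).mulVec η ⬝ᵥ η =
          ∑ i : Fin n, ∑ j : Fin n, A' x i j * η j * η i := by
        simp [Matrix.mulVec, dotProduct, Finset.sum_mul]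
      rw [e, e']
      simp only [Finset.sum_fn] at h
      exact h
    have := (convex_Icc lam⁻¹ lam).mul_sub_le_image_sub_of_le_deriv
      (f := fun y => (A y).mulVec η ⬝ᵥ η)
      (fun x hx => (hq x hx).continuousAt.continuousWithinAt)
      (fun x hx => ((hq x (interior_subset hx)).differentiableAt).differentiableWithinAt)
      (C := F * (η ⬝ᵥ η))
      (fun x hx => by
        rw [(hq x (interior_subset hx)).deriv]
        exact hmono x (interior_subset hx) η)
      s hs t ht hst
    linarith [this]
  -- Step 4: Cauchy-Schwarz, ξ⬝ξ ≤ lam^2 * (η⬝η)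
  have step4 : ξ ⬝ᵥ ξ ≤ lam ^ 2 * (η ⬝ᵥ η) := by
    have hp : ∀ x : ℝ, 0 ≤ ((A t).mulVec ξ ⬝ᵥ ξ) * (x * x) +
        (2 * (ξ ⬝ᵥ ξ)) * x + (A t).mulVec η ⬝ᵥ η := by
      intro x
      have h0 := hqnn t ht (η + x • ξ)
      rw [Matrix.mulVec_add, Matrix.mulVec_smul, add_dotProduct,
        dotProduct_add, dotProduct_add, smul_dotProduct,
        dotProduct_smul, dotProduct_smul, hAη] at h0
      have e2 : (A t).mulVec ξ ⬝ᵥ η = ξ ⬝ᵥ ξ := by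
        rw [hsd t ht ξ η, hAη]
      have e3' : ξ ⬝ᵥ η = (A t).mulVec η ⬝ᵥ η := by
        rw [hsd t ht η η, hAη, dotProduct_comm]
      rw [e2, e3'] at h0
      simp only [smul_dotProduct, Matrix.smul_mulVec, smul_eq_mul] at h0
      nlinarith [h0]
    have hd := discrim_le_zero hp
    rw [discrim] at hd
    have hb : 0 ≤ ξ ⬝ᵥ ξ := hdotnn ξ
    rcases eq_or_lt_of_le hb with hb0 | hbp
    · rw [← hb0]; exact mul_nonneg (by positivity) (hdotnn η)
    · have ha : (A t).mulVec ξ ⬝ᵥ ξ ≤ lam * (ξ ⬝ᵥ ξ) := (hell t ht ξ).2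
      have hc : (A t).mulVec η ⬝ᵥ η ≤ lam * (η ⬝ᵥ η) := (hell t ht η).2
      have hcnn : 0 ≤ (A t).mulVec η ⬝ᵥ η := hqnn t ht η
      have hann : 0 ≤ (A t).mulVec ξ ⬝ᵥ ξ := hqnn t ht ξ
      -- (2b)^2 - 4 a c ≤ 0, a ≤ lam*b, c ≤ lam*(η⬝η)
      nlinarith [mul_le_mul ha hc hcnn (by positivity), hdotnn η]
  -- conclusion
  have key : F * (t - s) * (η ⬝ᵥ η) ≤ ((A s)⁻¹ - (A t)⁻¹).mulVec ξ ⬝ᵥ ξ := by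
    rw [Matrix.sub_mulVec, sub_dotProduct]
    have e4 : (A t)⁻¹.mulVec ξ ⬝ᵥ ξ = ξ ⬝ᵥ η := by
      rw [← hη]; exact dotProduct_comm _ _
    have e3 : (A t).mulVec η ⬝ᵥ η = ξ ⬝ᵥ η := by
      rw [hsd t ht η η, hAη, dotProduct_comm]
    rw [e4, ← hu]
    linarith [step1, step3]
  have hts : 0 ≤ t - s := sub_nonneg.2 hst
  have hmain : F * (lam ^ 4)⁻¹ * (t - s) * (ξ ⬝ᵥ ξ) ≤ F * (t - s) * (η ⬝ᵥ η) := by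
    have h1 : F * (lam ^ 4)⁻¹ * (t - s) * (ξ ⬝ᵥ ξ) ≤
        F * (lam ^ 4)⁻¹ * (t - s) * (lam ^ 2 * (η ⬝ᵥ η)) := by
      apply mul_le_mul_of_nonneg_left step4 (by positivity)
    have h2 : F * (lam ^ 4)⁻¹ * (t - s) * (lam ^ 2 * (η ⬝ᵥ η)) ≤
        F * (t - s) * (η ⬝ᵥ η) := by
      have hl2 : (lam ^ 4)⁻¹ * lam ^ 2 ≤ 1 := by
        rw [← div_eq_inv_mul, div_le_one (by positivity)]
        exact pow_le_pow_right₀ hlam (by norm_num)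
      nlinarith [hdotnn η, mul_nonneg (mul_nonneg hF.le hts) (hdotnn η)]
    linarith
  linarith
end

section
/- Let Ω ⊂ ℝⁿ be a bounded Lipschitz domain partitioned (up to measure zero) into finitely many Lipschitz subdomains A₁, …, A_N, and let h : Ω → ℝ be such that h|_{Ā_j} is real-analytic for each j and h is continuous on Ω̄. Suppose Ω is connected, Ā₁ ∩ ∂Ω contains a nonempty open portion Γ of ∂Ω, and the chain condition holds: the subdomains can be ordered so that Ā_j ∩ Ā_{j+1} has nonempty interior relative to a common (n−1)-dimensional interface. If h together with all its derivatives of every order vanishes on Γ, and at each interface the vanishing of h and its derivatives propagates (i.e. analytic continuation across interfaces holds), then h ≡ 0 in Ω. -/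
open MeasureTheory

/-- Piecewise-analytic propagation of smallness: if `Ω` is partitioned (up to
measure zero) into finitely many subdomains `A j` on each of which `h` is
real-analytic (i.e. analytic on a connected open neighborhood `U j` of the
closure of `A j`), `h` is continuous on `Ω̄`, `h` and all its derivatives
vanish on a nonempty relatively open portion `Γ` of `∂Ω` touching the first
subdomain, and consecutive neighborhoods overlap (analytic continuation
across the interfaces), then `h ≡ 0` in `Ω`. -/
theorem piecewise_analytic_unique_continuation
    (n : ℕ) (Ω : Set (EuclideanSpace ℝ (Fin n)))
    (hΩ_open : IsOpen Ω) (hΩ_conn : IsConnected Ω)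
    (hΩ_bdd : Bornology.IsBounded Ω)
    (h : EuclideanSpace ℝ (Fin n) → ℝ)
    (hcont : ContinuousOn h (closure Ω))
    (N : ℕ) (hN : 0 < N)
    (A U : ℕ → Set (EuclideanSpace ℝ (Fin n)))
    -- the subdomains cover Ω up to measure zero:
    (hcover : volume (Ω \ ⋃ j ∈ Finset.range N, A j) = 0)
    (hA_sub : ∀ j < N, A j ⊆ Ω)
    -- h extends real-analytically to a connected open neighborhood of each Ā_j:
    (hU_open : ∀ j < N, IsOpen (U j))
    (hU_conn : ∀ j < N, IsPreconnected (U j))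
    (hU_nbhd : ∀ j < N, closure (A j) ⊆ U j)
    (hanalytic : ∀ j < N, AnalyticOnNhd ℝ h (U j))
    -- Γ is a nonempty relatively open portion of ∂Ω contained in Ā₀:
    (Γ : Set (EuclideanSpace ℝ (Fin n))) (hΓ_ne : Γ.Nonempty)
    (hΓ_open : ∃ V, IsOpen V ∧ Γ = V ∩ frontier Ω)
    (hΓ_sub : Γ ⊆ closure (A 0)) (hΓU : Γ ⊆ U 0)
    -- h and all its derivatives vanish on Γ:
    (hvanish : ∀ x ∈ Γ, ∀ k : ℕ, iteratedFDeriv ℝ k h x = 0)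
    -- the chain condition: consecutive neighborhoods overlap:
    (hchain : ∀ j, j + 1 < N → (U j ∩ U (j + 1)).Nonempty) :
    ∀ x ∈ Ω, h x = 0 := by
  classical
  -- Step 1: h vanishes in a neighborhood of a point x₀ of Γ
  obtain ⟨x₀, hx₀⟩ := hΓ_ne
  obtain ⟨p, hp⟩ := hanalytic 0 hN x₀ (hΓU hx₀)
  obtain ⟨r, hr⟩ := hp
  have hev : h =ᶠ[nhds x₀] 0 := by
    have hball : ∀ y ∈ EMetric.ball x₀ r, h y = 0 := by
      intro y hy
      have hy' : y - x₀ ∈ EMetric.ball (0 : EuclideanSpace ℝ (Fin n)) r := by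
        simpa [EMetric.ball, Metric.mem_eball, edist_eq_enorm_sub] using hy
      have := hr.hasSum_iteratedFDeriv hy'
      simp only [hvanish x₀ hx₀] at this
      have h0 : HasSum (fun k : ℕ => ((Nat.factorial k : ℝ)⁻¹ •
          (0 : ContinuousMultilinearMap ℝ (fun _ : Fin k => EuclideanSpace ℝ (Fin n)) ℝ))
          fun _ => y - x₀) (h (x₀ + (y - x₀))) := this
      simp only [smul_zero, ContinuousMultilinearMap.zero_apply] at h0
      have := h0.unique hasSum_zero
      simpa using this
    have : EMetric.ball x₀ r ∈ nhds x₀ := EMetric.ball_mem_nhds _ hr.r_pos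
    filter_upwards [this] with y hy using hball y hy
  -- Step 2: by induction along the chain, h = 0 on every U j
  have hUzero : ∀ j < N, Set.EqOn h 0 (U j) := by
    intro j
    induction j with
    | zero =>
      intro hj
      exact (hanalytic 0 hN).eqOn_zero_of_preconnected_of_eventuallyEq_zero
        (hU_conn 0 hN) (hΓU hx₀) hev
    | succ k ih =>
      intro hk
      have hkN : k < N := Nat.lt_of_succ_lt hk
      obtain ⟨z, hz1, hz2⟩ := hchain k hk
      have hev' : h =ᶠ[nhds z] 0 := by
        filter_upwards [(hU_open k hkN).mem_nhds hz1] with y hy using ih hkN hy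
      exact (hanalytic (k + 1) hk).eqOn_zero_of_preconnected_of_eventuallyEq_zero
        (hU_conn (k + 1) hk) hz2 hev'
  -- Step 3: h = 0 on the union S of the A j, which is dense in Ω
  set S : Set (EuclideanSpace ℝ (Fin n)) := ⋃ j ∈ Finset.range N, A j with hS
  have hSzero : ∀ x ∈ S, h x = 0 := by
    intro x hx
    simp only [hS, Set.mem_iUnion, Finset.mem_range] at hx
    obtain ⟨j, hj, hxj⟩ := hx
    exact hUzero j hj (hU_nbhd j hj (subset_closure hxj))
  have hSsub : S ⊆ Ω := by
    intro x hx
    simp only [hS, Set.mem_iUnion, Finset.mem_range] at hx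
    obtain ⟨j, hj, hxj⟩ := hx
    exact hA_sub j hj hxj
  intro x hx
  -- x is in the closure of S
  have hxc : x ∈ closure S := by
    by_contra hxc
    obtain ⟨V, hVopen, hxV, hVS⟩ : ∃ V, IsOpen V ∧ x ∈ V ∧ V ∩ S = ∅ := by
      refine ⟨(closure S)ᶜ, isClosed_closure.isOpen_compl, hxc, ?_⟩
      rw [Set.eq_empty_iff_forall_notMem]
      rintro y ⟨hy1, hy2⟩
      exact hy1 (subset_closure hy2)
    have hW : IsOpen (V ∩ Ω) := hVopen.inter hΩ_open
    have hWne : (V ∩ Ω).Nonempty := ⟨x, hxV, hx⟩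
    have hWsub : V ∩ Ω ⊆ Ω \ S := by
      rintro y ⟨hy1, hy2⟩
      refine ⟨hy2, fun hy3 => ?_⟩
      exact Set.eq_empty_iff_forall_notMem.mp hVS y ⟨hy1, hy3⟩
    have : volume (V ∩ Ω) = 0 := measure_mono_null hWsub hcover
    exact absurd this (hW.measure_pos volume hWne).ne'
  -- conclude by continuity
  have hne : (nhdsWithin x S).NeBot := mem_closure_iff_nhdsWithin_neBot.mp hxc
  have h1 : Filter.Tendsto h (nhdsWithin x S) (nhds (h x)) := by
    have := (hcont x (subset_closure hx)).mono (hSsub.trans subset_closure)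
    exact this
  have h2 : Filter.Tendsto h (nhdsWithin x S) (nhds 0) := by
    refine Filter.Tendsto.congr' ?_ tendsto_const_nhds
    filter_upwards [self_mem_nhdsWithin] with y hy using (hSzero y hy).symm
  exact tendsto_nhds_unique h1 h2
end
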